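/- Let q be a prime power, c ∈ F_q, n ≥ 2, W ⊆ {0,...,n} (with n ∉ W if q = 2). If the least period of Δ_{W,c} = δ_0 − (Σ_{w ∈ W} (−1)^w δ_w − c δ_0)^{⊗(q−1)} on Z/(q^n−1)Z does not divide (q^n−1)/Φ_n(q), then there exists a monic irreducible polynomial P of degree n over F_q such that Σ_{w ∈ n−W} [x^w]P(x) = c. -/

import Mathlib

/-- `inOmega q n w j` : `j` is a sum of `w` distinct `q`-powers `q^i` with `0 ≤ i ≤ n-1`. -/
def inOmega (q n w j : ℕ) : Prop :=
  ∃ s : Finset (Fin n), s.card = w ∧ j = ∑ i ∈ s, q ^ (i : ℕ)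

open scoped Classical in
/-- The indicator function `δ_w : ℤ/(qⁿ-1)ℤ → R` of `Ω(w)`. -/
noncomputable def deltaFun {R : Type*} [CommRing R] (q n w : ℕ)
    (k : ZMod (q ^ n - 1)) : R :=
  if inOmega q n w k.val then 1 else 0

/-- `f : ℤ/Nℤ → α` is `r`-periodic if `f(i + r) = f(i)` for all `i`. -/
def IsPeriodicZMod {N : ℕ} {α : Type*} (f : ZMod N → α) (r : ℕ) : Prop :=
  ∀ i : ZMod N, f (i + (r : ZMod N)) = f i

/-- The least period of `f : ℤ/Nℤ → α`. -/
noncomputable def leastPeriod {N : ℕ} {α : Type*} (f : ZMod N → α) : ℕ :=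
  sInf {r : ℕ | 0 < r ∧ IsPeriodicZMod f r}

/-- Convolution on `ℤ/Nℤ`: `(f ⊗ g)(i) = ∑_{j+k=i} f(j) g(k)`. -/
def conv {F : Type*} [CommRing F] (N : ℕ) (f g : ZMod N → F) (i : ZMod N) : F :=
  ∑ j ∈ Finset.range N, f (j : ZMod N) * g (i - (j : ZMod N))

/-- `convPow N f m` is the `m`-th convolution power `f^{⊗m}` of `f`,
with `f^{⊗0} = δ₀` the Kronecker delta (the convolution identity). -/
def convPow {F : Type*} [CommRing F] (N : ℕ) (f : ZMod N → F) : ℕ → (ZMod N → F)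
  | 0 => fun i => if i = 0 then 1 else 0
  | m + 1 => conv N f (convPow N f m)

namespace AuxIrr
open Polynomial
open scoped Classical


/- ### Geometric sums over ℕ -/

theorem geom_nat (q : ℕ) (hq : 1 ≤ q) : ∀ n : ℕ, (q - 1) * ∑ i ∈ Finset.range n, q ^ i = q ^ n - 1 := by
  intro n
  induction n with
  | zero => simp
  | succ n ih =>
    rw [Finset.sum_range_succ, Nat.mul_add, ih]
    have hA : 1 ≤ q ^ n := Nat.one_le_pow _ _ hq
    have hB : q ^ n ≤ q ^ (n+1) := Nat.pow_le_pow_right hq (by omega)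
    have : (q - 1) * q ^ n = q ^ (n+1) - q ^ n := by
      rw [Nat.sub_mul, one_mul, ← pow_succ']
    rw [this]
    omega

theorem sum_pow_le (q n : ℕ) (hq : 2 ≤ q) {s : Finset ℕ} (hs : s ⊆ Finset.range n) :
    ∑ i ∈ s, q ^ i ≤ q ^ n - 1 := by
  have h1 : ∑ i ∈ s, q ^ i ≤ ∑ i ∈ Finset.range n, q ^ i :=
    Finset.sum_le_sum_of_subset hs
  have h2 : ∑ i ∈ Finset.range n, q ^ i ≤ (q - 1) * ∑ i ∈ Finset.range n, q ^ i :=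
    Nat.le_mul_of_pos_left _ (by omega)
  have := geom_nat q (by omega) n
  omega

theorem sum_pow_lt (q n : ℕ) (hq : 2 ≤ q) (hn : 1 ≤ n) {s : Finset ℕ} (hs : s ⊆ Finset.range n)
    (hne : 3 ≤ q ∨ s ≠ Finset.range n) : ∑ i ∈ s, q ^ i < q ^ n - 1 := by
  rcases hne with h3 | hne
  · -- q ≥ 3 : even the full sum is < q^n - 1
    have h1 : ∑ i ∈ s, q ^ i ≤ ∑ i ∈ Finset.range n, q ^ i := Finset.sum_le_sum_of_subset hs
    have h2 : 2 * ∑ i ∈ Finset.range n, q ^ i ≤ (q - 1) * ∑ i ∈ Finset.range n, q ^ i :=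
      Nat.mul_le_mul_right _ (by omega)
    have h3' := geom_nat q (by omega) n
    have hpos : 0 < ∑ i ∈ Finset.range n, q ^ i := by
      apply Finset.sum_pos'
      · intro i _; exact Nat.zero_le _
      · exact ⟨0, Finset.mem_range.mpr (by omega), by simp⟩
    omega
  · -- s is a proper subset of range n
    have hss : s ⊂ Finset.range n := lt_of_le_of_ne hs hne
    obtain ⟨j, hj, hjs⟩ := Finset.exists_of_ssubset hss
    have h1 : ∑ i ∈ s, q ^ i + q ^ j ≤ ∑ i ∈ Finset.range n, q ^ i := by
      have : ∑ i ∈ insert j s, q ^ i ≤ ∑ i ∈ Finset.range n, q ^ i :=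
        Finset.sum_le_sum_of_subset (Finset.insert_subset hj hs)
      rwa [Finset.sum_insert hjs, Nat.add_comm] at this
    have h2 := sum_pow_le q n hq (le_refl (Finset.range n))
    have hqj : 0 < q ^ j := Nat.pow_pos (by omega)
    omega

theorem sum_pow_injOn (q : ℕ) (hq : 2 ≤ q) :
    ∀ n : ℕ, ∀ s t : Finset ℕ, s ⊆ Finset.range n → t ⊆ Finset.range n →
      (∑ i ∈ s, q ^ i) = (∑ i ∈ t, q ^ i) → s = t := by
  intro n
  induction n with
  | zero => intro s t hs ht _
            simp only [Finset.range_zero, Finset.subset_empty] at hs ht; rw [hs, ht]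
  | succ n ih =>
    intro s t hs ht hsum
    have key : ∀ u v : Finset ℕ, u ⊆ Finset.range (n+1) → v ⊆ Finset.range (n+1) →
        (∑ i ∈ u, q ^ i) = (∑ i ∈ v, q ^ i) → n ∈ u → n ∈ v := by
      intro u v hu hv huv hnu
      by_contra hnv
      have hv' : v ⊆ Finset.range n := by
        intro x hx
        have := hv hx
        simp only [Finset.mem_range] at this ⊢
        rcases Nat.lt_succ_iff_lt_or_eq.mp this with h | h
        · exact h
        · exact absurd (h ▸ hx) hnv
      have h1 : q ^ n ≤ ∑ i ∈ u, q ^ i := Finset.single_le_sum (fun i _ => Nat.zero_le _) hnu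
      have h2 : ∑ i ∈ v, q ^ i ≤ q ^ n - 1 := sum_pow_le q n (by omega) hv'
      have : 0 < q ^ n := Nat.pow_pos (by omega)
      omega
    have hiff : (n ∈ s ↔ n ∈ t) := ⟨key s t hs ht hsum, key t s ht hs hsum.symm⟩
    have hes : s.erase n ⊆ Finset.range n := by
      intro x hx
      have h1 := Finset.mem_of_mem_erase hx
      have h2 := Finset.ne_of_mem_erase hx
      have := hs h1; simp only [Finset.mem_range] at this ⊢; omega
    have het : t.erase n ⊆ Finset.range n := by
      intro x hx
      have h1 := Finset.mem_of_mem_erase hx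
      have h2 := Finset.ne_of_mem_erase hx
      have := ht h1; simp only [Finset.mem_range] at this ⊢; omega
    have hsum' : (∑ i ∈ s.erase n, q ^ i) = (∑ i ∈ t.erase n, q ^ i) := by
      by_cases hn : n ∈ s
      · have hnt : n ∈ t := hiff.mp hn
        have e1 : ∑ i ∈ s, q ^ i = q ^ n + ∑ i ∈ s.erase n, q ^ i :=
          (Finset.add_sum_erase _ _ hn).symm
        have e2 : ∑ i ∈ t, q ^ i = q ^ n + ∑ i ∈ t.erase n, q ^ i :=
          (Finset.add_sum_erase _ _ hnt).symm
        omega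
      · have hnt : n ∉ t := fun h => hn (hiff.mpr h)
        rwa [Finset.erase_eq_of_notMem hn, Finset.erase_eq_of_notMem hnt]
    have := ih _ _ hes het hsum'
    -- s = t from erase equality and membership iff
    ext x
    by_cases hx : x = n
    · subst hx; exact hiff
    · constructor
      · intro h; exact Finset.mem_of_mem_erase (this ▸ Finset.mem_erase.mpr ⟨hx, h⟩)
      · intro h; exact Finset.mem_of_mem_erase (this ▸ Finset.mem_erase.mpr ⟨hx, h⟩ : x ∈ s.erase n)

/- ### Periodicity -/

theorem isPeriodic_mul {N : ℕ} {α : Type*} {f : ZMod N → α} {r : ℕ}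
    (h : IsPeriodicZMod f r) (m : ℕ) : IsPeriodicZMod f (r * m) := by
  induction m with
  | zero => intro i; simp
  | succ m ih =>
    intro i
    have : ((r * (m+1) : ℕ) : ZMod N) = (r * m : ℕ) + (r : ℕ) := by push_cast; ring
    rw [this, ← add_assoc, h, ih]

theorem leastPeriod_dvd {N : ℕ} [NeZero N] {α : Type*} (f : ZMod N → α) {r : ℕ}
    (hr : 0 < r) (h : IsPeriodicZMod f r) : leastPeriod f ∣ r := by
  have hNmem : N ∈ {r : ℕ | 0 < r ∧ IsPeriodicZMod f r} := by
    refine ⟨Nat.pos_of_ne_zero (NeZero.ne N), fun i => by simp⟩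
  have hne : {r : ℕ | 0 < r ∧ IsPeriodicZMod f r}.Nonempty := ⟨N, hNmem⟩
  set L := leastPeriod f with hL
  have hLmem : L ∈ {r : ℕ | 0 < r ∧ IsPeriodicZMod f r} := Nat.sInf_mem hne
  obtain ⟨hLpos, hLper⟩ := hLmem
  -- r % L is a period
  have hmod : IsPeriodicZMod f (r % L) := by
    intro i
    have hdecomp : r = L * (r / L) + r % L := (Nat.div_add_mod r L).symm
    have := isPeriodic_mul hLper (r / L) (i + ((r % L : ℕ) : ZMod N))
    calc f (i + ((r % L : ℕ) : ZMod N))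
        = f (i + ((r % L : ℕ) : ZMod N) + ((L * (r / L) : ℕ) : ZMod N)) := this.symm
      _ = f (i + ((r : ℕ) : ZMod N)) := by
          congr 1
          rw [add_assoc, ← Nat.cast_add]
          congr 2
          omega
      _ = f i := h i
  by_cases hzero : r % L = 0
  · exact Nat.dvd_of_mod_eq_zero hzero
  · exfalso
    have : L ≤ r % L := Nat.sInf_le ⟨Nat.pos_of_ne_zero hzero, hmod⟩
    have : r % L < L := Nat.mod_lt _ hLpos
    omega



theorem sum_range_eq {M : Type*} [AddCommMonoid M] {N : ℕ} [NeZero N] (f : ZMod N → M) :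
    ∑ j ∈ Finset.range N, f ((j : ℕ) : ZMod N) = ∑ k : ZMod N, f k := by
  apply Finset.sum_nbij' (fun j => ((j : ℕ) : ZMod N)) (fun k => k.val)
  · intro a _; exact Finset.mem_univ _
  · intro a _; exact Finset.mem_range.mpr (ZMod.val_lt a)
  · intro a ha; exact ZMod.val_cast_of_lt (Finset.mem_range.mp ha)
  · intro a _; exact ZMod.natCast_rightInverse a
  · intro a _; rfl

theorem conv_eq_sum_univ {K : Type*} [CommRing K] {N : ℕ} [NeZero N] (f g : ZMod N → K)
    (i : ZMod N) : conv N f g i = ∑ j : ZMod N, f j * g (i - j) := by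
  rw [conv, sum_range_eq (fun j => f j * g (i - j))]

theorem pow_eq_of_modEq {K : Type*} [Monoid K] {N : ℕ} {b : K} (hb : b ^ N = 1)
    {a c : ℕ} (h : a ≡ c [MOD N]) : b ^ a = b ^ c := by
  have hdvd : orderOf b ∣ N := orderOf_dvd_iff_pow_eq_one.mpr hb
  have h' : a ≡ c [MOD orderOf b] := h.of_dvd hdvd
  calc b ^ a = b ^ (a % orderOf b) := (pow_mod_orderOf ..).symm
    _ = b ^ (c % orderOf b) := by rw [h']
    _ = b ^ c := pow_mod_orderOf ..

theorem pow_val_add {K : Type*} [Monoid K] {N : ℕ} [NeZero N] {b : K} (hb : b ^ N = 1)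
    (x y : ZMod N) : b ^ (x + y).val = b ^ x.val * b ^ y.val := by
  rw [← pow_add]
  apply pow_eq_of_modEq hb
  rw [ZMod.val_add]
  exact (Nat.mod_modEq _ _)

/-- Discrete Fourier transform evaluation at `b`. -/
def dft {K : Type*} [CommRing K] {N : ℕ} [NeZero N] (f : ZMod N → K) (b : K) : K :=
  ∑ k : ZMod N, f k * b ^ k.val

theorem dft_delta0 {K : Type*} [CommRing K] {N : ℕ} [NeZero N] (b : K) :
    dft (fun i : ZMod N => if i = 0 then (1 : K) else 0) b = 1 := by
  rw [dft]
  rw [Finset.sum_eq_single (0 : ZMod N)]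
  · simp
  · intro k _ hk; simp [hk]
  · intro h; exact absurd (Finset.mem_univ _) h

theorem dft_conv {K : Type*} [CommRing K] {N : ℕ} [NeZero N] (f g : ZMod N → K) {b : K}
    (hb : b ^ N = 1) : dft (conv N f g) b = dft f b * dft g b := by
  rw [dft, dft, dft, Finset.sum_mul_sum]
  simp_rw [conv_eq_sum_univ, Finset.sum_mul]
  rw [Finset.sum_comm]
  apply Finset.sum_congr rfl
  intro j _
  -- LHS : ∑ i, f j * g (i - j) * b ^ i.val ; RHS : ∑ k, f j * b^j.val * (g k * b^k.val)
  have := Equiv.sum_comp (Equiv.addLeft j : ZMod N ≃ ZMod N)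
    (fun i => f j * g (i - j) * b ^ i.val)
  rw [← this]
  apply Finset.sum_congr rfl
  intro k _
  have h2 : ((Equiv.addLeft j) k : ZMod N) = j + k := by simp
  have h1 : (Equiv.addLeft j) k - j = k := by rw [h2]; ring
  rw [h1, h2, pow_val_add hb]
  ring

theorem dft_convPow {K : Type*} [CommRing K] {N : ℕ} [NeZero N] (f : ZMod N → K) {b : K}
    (hb : b ^ N = 1) (m : ℕ) : dft (convPow N f m) b = (dft f b) ^ m := by
  induction m with
  | zero => rw [convPow, pow_zero]; exact dft_delta0 b
  | succ m ih => rw [convPow, dft_conv _ _ hb, ih, pow_succ]; ring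

theorem geom_sum_field {K : Type*} [Field K] {N : ℕ} (hN : 0 < N) (γ : K) (hγ : γ ^ N = 1) :
    ∑ i ∈ Finset.range N, γ ^ i = if γ = 1 then (N : K) else 0 := by
  classical
  by_cases h : γ = 1
  · simp [h]
  · rw [if_neg h, geom_sum_eq h, hγ, sub_self, zero_div]

theorem dft_inversion {K : Type*} [Field K] {N : ℕ} [NeZero N] (α : Kˣ) (hα : orderOf α = N)
    (f : ZMod N → K) (k : ZMod N) :
    ∑ i ∈ Finset.range N, dft f ((α : K) ^ i) * ((α⁻¹ : Kˣ) : K) ^ (i * k.val)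
      = (N : K) * f k := by
  have hN : 0 < N := Nat.pos_of_ne_zero (NeZero.ne N)
  have hαN : (α : K) ^ N = 1 := by
    rw [← hα, ← Units.val_pow_eq_pow_val, pow_orderOf_eq_one, Units.val_one]
  have hαinv : ((α⁻¹ : Kˣ) : K) = ((α : K))⁻¹ := by
    simp
  have key : ∀ i ∈ Finset.range N,
      dft f ((α : K) ^ i) * ((α⁻¹ : Kˣ) : K) ^ (i * k.val)
        = ∑ k' : ZMod N, f k' * ((α : K) ^ k'.val * ((α : K) ^ k.val)⁻¹) ^ i := by
    intro i _
    rw [dft, Finset.sum_mul]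
    apply Finset.sum_congr rfl
    intro k' _
    rw [mul_assoc]
    congr 1
    rw [hαinv, ← pow_mul, Nat.mul_comm i k'.val, pow_mul, Nat.mul_comm i k.val, pow_mul,
      inv_pow, ← mul_pow]
  rw [Finset.sum_congr rfl key, Finset.sum_comm]
  have inner : ∀ k' : ZMod N,
      ∑ i ∈ Finset.range N, f k' * ((α : K) ^ k'.val * ((α : K) ^ k.val)⁻¹) ^ i
        = f k' * (if k' = k then (N : K) else 0) := by
    intro k'
    rw [← Finset.mul_sum]
    congr 1
    set γ : K := (α : K) ^ k'.val * ((α : K) ^ k.val)⁻¹ with hγdef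
    have hαne : (α : K) ^ k.val ≠ 0 := pow_ne_zero _ (Units.ne_zero α)
    have hγN : γ ^ N = 1 := by
      have h1 : ((α : K) ^ k'.val) ^ N = 1 := by
        rw [← pow_mul, Nat.mul_comm, pow_mul, hαN, one_pow]
      have h2 : (((α : K) ^ k.val)⁻¹) ^ N = 1 := by
        rw [inv_pow, ← pow_mul, Nat.mul_comm, pow_mul, hαN, one_pow, inv_one]
      rw [hγdef, mul_pow, h1, h2, mul_one]
    rw [geom_sum_field hN γ hγN]
    have hiff : γ = 1 ↔ k' = k := by
      rw [hγdef, mul_inv_eq_one₀ hαne]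
      constructor
      · intro h
        have hu : α ^ k'.val = α ^ k.val := Units.ext (by
          rw [Units.val_pow_eq_pow_val, Units.val_pow_eq_pow_val]; exact h)
        have := pow_eq_pow_iff_modEq.mp hu
        rw [hα] at this
        have h1 : k'.val < N := ZMod.val_lt k'
        have h2 : k.val < N := ZMod.val_lt k
        have : k'.val = k.val := by
          unfold Nat.ModEq at this
          rwa [Nat.mod_eq_of_lt h1, Nat.mod_eq_of_lt h2] at this
        exact ZMod.val_injective _ this
      · intro h; rw [h]
    by_cases h : k' = k
    · rw [if_pos h, if_pos (hiff.mpr h)]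
    · rw [if_neg h, if_neg (fun hh => h (hiff.mp hh))]
  rw [Finset.sum_congr rfl (fun k' _ => inner k')]
  have : (∑ k' : ZMod N, f k' * if k' = k then (N : K) else 0)
      = ∑ k' : ZMod N, if k' = k then f k' * (N : K) else 0 := by
    apply Finset.sum_congr rfl
    intro k' _
    by_cases h : k' = k
    · rw [if_pos h, if_pos h]
    · rw [if_neg h, if_neg h, mul_zero]
  rw [this, Finset.sum_ite_eq' Finset.univ k (fun k' => f k' * (N : K)),
    if_pos (Finset.mem_univ _), mul_comm]




theorem forall_pow_card_eq (F : Type*) [Field F] [Fintype F] {n : ℕ} (hn : n ≠ 0)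
    (x : SplittingField (X ^ (Fintype.card F ^ n) - X : F[X])) :
    x ^ (Fintype.card F ^ n) = x := by
  obtain ⟨p, hp⟩ := CharP.exists F
  haveI : CharP F p := hp
  obtain ⟨v, hpprime, hcard⟩ := FiniteField.card F p
  haveI : Fact p.Prime := ⟨hpprime⟩
  haveI : CharP (SplittingField (X ^ (Fintype.card F ^ n) - X : F[X])) p :=
    charP_of_injective_algebraMap (algebraMap F _).injective p
  have hQ : Fintype.card F ^ n = p ^ ((v : ℕ) * n) := by rw [hcard, pow_mul]
  have key : ∀ y : SplittingField (X ^ (Fintype.card F ^ n) - X : F[X]),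
      y ^ (Fintype.card F ^ n) = y ^ (p ^ ((v : ℕ) * n)) :=
    fun y => congrArg (fun m => y ^ m) hQ
  let A : Subalgebra F (SplittingField (X ^ (Fintype.card F ^ n) - X : F[X])) :=
    { carrier := {x | x ^ (Fintype.card F ^ n) = x}
      mul_mem' := by
        intro a b ha hb
        have ha' : a ^ (Fintype.card F ^ n) = a := ha
        have hb' : b ^ (Fintype.card F ^ n) = b := hb
        show (a * b) ^ (Fintype.card F ^ n) = a * b
        rw [mul_pow, ha', hb']
      one_mem' := by
        show (1 : SplittingField (X ^ (Fintype.card F ^ n) - X : F[X])) ^ _ = 1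
        rw [one_pow]
      add_mem' := by
        intro a b ha hb
        have ha' : a ^ (Fintype.card F ^ n) = a := ha
        have hb' : b ^ (Fintype.card F ^ n) = b := hb
        show (a + b) ^ (Fintype.card F ^ n) = a + b
        rw [key (a + b), add_pow_char_pow, ← key a, ← key b, ha', hb']
      zero_mem' := by
        show (0 : SplittingField (X ^ (Fintype.card F ^ n) - X : F[X])) ^ _ = 0
        exact zero_pow (by positivity)
      algebraMap_mem' := by
        intro r
        show (algebraMap F _ r) ^ (Fintype.card F ^ n) = algebraMap F _ r
        rw [← map_pow, FiniteField.pow_card_pow] }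
  have hroot : (X ^ (Fintype.card F ^ n) - X : F[X]).rootSet
      (SplittingField (X ^ (Fintype.card F ^ n) - X : F[X])) ⊆ (A : Set _) := by
    intro x hx
    rw [mem_rootSet] at hx
    have := hx.2
    simp only [map_sub, map_pow, aeval_X, sub_eq_zero] at this
    exact this
  have htop := SplittingField.adjoin_rootSet (X ^ (Fintype.card F ^ n) - X : F[X])
  have hA : A = ⊤ := top_le_iff.mp (htop ▸ Algebra.adjoin_le hroot)
  have : x ∈ A := hA ▸ Algebra.mem_top
  exact this

theorem card_splittingField (F : Type*) [Field F] [Fintype F] {n : ℕ} (hn : n ≠ 0)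
    [Fintype (SplittingField (X ^ (Fintype.card F ^ n) - X : F[X]))] :
    Fintype.card (SplittingField (X ^ (Fintype.card F ^ n) - X : F[X]))
      = Fintype.card F ^ n := by
  classical
  have hq2 : 1 < Fintype.card F := Fintype.one_lt_card
  obtain ⟨p, hp⟩ := CharP.exists F
  haveI : CharP F p := hp
  obtain ⟨v, hpprime, hcard⟩ := FiniteField.card F p
  haveI : Fact p.Prime := ⟨hpprime⟩
  have hpdvd : p ∣ Fintype.card F ^ n := by
    rw [hcard]
    exact dvd_pow (dvd_pow_self p (by simpa using v.ne_zero)) hn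
  have hsep : (X ^ (Fintype.card F ^ n) - X : F[X]).Separable := galois_poly_separable p _ hpdvd
  have hsplits : Splits ((X ^ (Fintype.card F ^ n) - X : F[X]).map
      (algebraMap F (SplittingField (X ^ (Fintype.card F ^ n) - X : F[X])))) := SplittingField.splits _
  have hdeg : (X ^ (Fintype.card F ^ n) - X : F[X]).natDegree = Fintype.card F ^ n :=
    FiniteField.X_pow_card_pow_sub_X_natDegree_eq F hn hq2
  have hcardroot : Fintype.card ((X ^ (Fintype.card F ^ n) - X : F[X]).rootSet
      (SplittingField (X ^ (Fintype.card F ^ n) - X : F[X]))) = Fintype.card F ^ n := by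
    rw [card_rootSet_eq_natDegree hsep hsplits, hdeg]
  have hge : Fintype.card ↑((X ^ (Fintype.card F ^ n) - X : F[X]).rootSet
      (SplittingField (X ^ (Fintype.card F ^ n) - X : F[X])))
      ≤ Fintype.card (SplittingField (X ^ (Fintype.card F ^ n) - X : F[X])) :=
    Fintype.card_le_of_injective (fun x => (x : _)) Subtype.val_injective
  have hmem : ∀ x : SplittingField (X ^ (Fintype.card F ^ n) - X : F[X]),
      x ∈ (X ^ (Fintype.card F ^ n) - X : F[X]).rootSet _ := by
    intro x
    rw [mem_rootSet]
    refine ⟨?_, ?_⟩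
    · intro h
      rw [h, natDegree_zero] at hdeg
      have : 0 < Fintype.card F ^ n := by positivity
      omega
    · simp only [map_sub, map_pow, aeval_X, sub_eq_zero]
      exact forall_pow_card_eq F hn x
  have hle : Fintype.card (SplittingField (X ^ (Fintype.card F ^ n) - X : F[X]))
      ≤ Fintype.card ↑((X ^ (Fintype.card F ^ n) - X : F[X]).rootSet
        (SplittingField (X ^ (Fintype.card F ^ n) - X : F[X]))) :=
    Fintype.card_le_of_injective (fun x => ⟨x, hmem x⟩)
      (fun a b h => by simpa using congrArg Subtype.val h)
  omega
theorem finrank_splittingField (F : Type*) [Field F] [Fintype F] {n : ℕ} (hn : n ≠ 0)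
    [Fintype (SplittingField (X ^ (Fintype.card F ^ n) - X : F[X]))] :
    Module.finrank F (SplittingField (X ^ (Fintype.card F ^ n) - X : F[X])) = n := by
  have h1 := card_splittingField F hn
  have h2 := Module.card_eq_pow_finrank (K := F)
    (V := SplittingField (X ^ (Fintype.card F ^ n) - X : F[X]))
  rw [h1] at h2
  exact (Nat.pow_right_injective Fintype.one_lt_card h2).symm

theorem mem_range_algebraMap_of_pow_card {F K : Type*} [Field F] [Fintype F] [Field K]
    [Fintype K] [Algebra F K] (x : K) (hx : x ^ Fintype.card F = x) :
    ∃ y : F, algebraMap F K y = x := by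
  classical
  set q := Fintype.card F with hq
  have hq2 : 1 < q := Fintype.one_lt_card
  have hdeg : (X ^ q - X : K[X]).natDegree = q :=
    FiniteField.X_pow_card_sub_X_natDegree_eq K hq2
  have hne : (X ^ q - X : K[X]) ≠ 0 := by
    intro h
    rw [h, natDegree_zero] at hdeg
    omega
  set B : Finset K := (X ^ q - X : K[X]).roots.toFinset with hB
  set A : Finset K := Finset.univ.image (algebraMap F K) with hA
  have hAB : A ⊆ B := by
    intro z hz
    rw [hA, Finset.mem_image] at hz
    obtain ⟨y, _, rfl⟩ := hz
    rw [hB, Multiset.mem_toFinset, mem_roots hne]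
    simp only [IsRoot.def, eval_sub, eval_pow, eval_X]
    rw [← map_pow, FiniteField.pow_card, sub_self]
  have hcardA : A.card = q := by
    rw [hA, Finset.card_image_of_injective _ (algebraMap F K).injective, Finset.card_univ]
  have hcardB : B.card ≤ q := by
    calc B.card ≤ Multiset.card (X ^ q - X : K[X]).roots := Multiset.toFinset_card_le _
      _ ≤ (X ^ q - X : K[X]).natDegree := card_roots' _
      _ = q := hdeg
  have hBA : A = B := Finset.eq_of_subset_of_card_le hAB (by omega)
  have hxB : x ∈ B := by
    rw [hB, Multiset.mem_toFinset, mem_roots hne]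
    simp only [IsRoot.def, eval_sub, eval_pow, eval_X]
    rw [hx, sub_self]
  rw [← hBA, hA, Finset.mem_image] at hxB
  obtain ⟨y, _, hy⟩ := hxB
  exact ⟨y, hy⟩

theorem cyclotomic_dvd_int {q n : ℕ} (hq : 2 ≤ q) (hn : 0 < n) :
    (Polynomial.cyclotomic n ℤ).eval (q : ℤ) ∣ (q : ℤ) ^ n - 1 := by
  have h := Polynomial.prod_cyclotomic_eq_X_pow_sub_one hn ℤ
  have hdvd : Polynomial.cyclotomic n ℤ ∣ (X ^ n - 1 : ℤ[X]) := by
    rw [← h]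
    exact Finset.dvd_prod_of_mem _ (Nat.mem_divisors_self n hn.ne')
  have := map_dvd (Polynomial.evalRingHom (q : ℤ)) hdvd
  simpa using this

theorem cyclotomic_mul_pow_dvd_int {q m n : ℕ} (hq : 2 ≤ q) (hm : m ∣ n) (hmpos : 0 < m)
    (hlt : m < n) :
    (Polynomial.cyclotomic n ℤ).eval (q : ℤ) * ((q : ℤ) ^ m - 1) ∣ (q : ℤ) ^ n - 1 := by
  have hn : 0 < n := lt_trans hmpos hlt
  have hsub : insert n m.divisors ⊆ n.divisors := by
    intro d hd
    rcases Finset.mem_insert.mp hd with rfl | hd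
    · exact Nat.mem_divisors_self _ hn.ne'
    · exact Nat.divisors_subset_of_dvd hn.ne' hm hd
  have hnotmem : n ∉ m.divisors := by
    intro h
    have := Nat.le_of_dvd hmpos (Nat.mem_divisors.mp h).1
    omega
  have hdvd : Polynomial.cyclotomic n ℤ * (X ^ m - 1 : ℤ[X]) ∣ (X ^ n - 1 : ℤ[X]) := by
    have h1 : Polynomial.cyclotomic n ℤ * (X ^ m - 1 : ℤ[X])
        = ∏ d ∈ insert n m.divisors, Polynomial.cyclotomic d ℤ := by
      rw [Finset.prod_insert hnotmem, Polynomial.prod_cyclotomic_eq_X_pow_sub_one hmpos]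
    rw [h1, ← Polynomial.prod_cyclotomic_eq_X_pow_sub_one hn ℤ]
    exact Finset.prod_dvd_prod_of_subset _ _ _ hsub
  have := map_dvd (Polynomial.evalRingHom (q : ℤ)) hdvd
  simpa using this



theorem dft_sub {K : Type*} [CommRing K] {N : ℕ} [NeZero N] (f g : ZMod N → K) (b : K) :
    dft (fun k => f k - g k) b = dft f b - dft g b := by
  rw [dft, dft, dft, ← Finset.sum_sub_distrib]
  apply Finset.sum_congr rfl
  intro k _
  ring

theorem dft_sum {K : Type*} [CommRing K] {N : ℕ} [NeZero N] {ι : Type*} (s : Finset ι)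
    (f : ι → ZMod N → K) (b : K) :
    dft (fun k => ∑ w ∈ s, f w k) b = ∑ w ∈ s, dft (f w) b := by
  rw [dft]
  simp_rw [Finset.sum_mul]
  rw [Finset.sum_comm]
  rfl

theorem dft_const_mul {K : Type*} [CommRing K] {N : ℕ} [NeZero N] (a : K) (f : ZMod N → K)
    (b : K) : dft (fun k => a * f k) b = a * dft f b := by
  rw [dft, dft, Finset.mul_sum]
  apply Finset.sum_congr rfl
  intro k _
  ring

/-- The DFT of the indicator of `Ω(w)` is the `w`-th elementary symmetric sum. -/
theorem dft_deltaFun {K : Type*} [Field K] {q n w : ℕ} (hq : 2 ≤ q) (hn : 1 ≤ n) (hw : w ≤ n)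
    (hbad : q = 2 → w ≠ n) [NeZero (q ^ n - 1)] (b : K) :
    dft (fun k : ZMod (q ^ n - 1) => (deltaFun q n w k : K)) b
      = ∑ s ∈ Finset.powersetCard w (Finset.univ : Finset (Fin n)),
          ∏ t ∈ s, b ^ (q ^ (t : ℕ)) := by
  have hsumlt : ∀ s : Finset (Fin n), s.card = w →
      (∑ t ∈ s, q ^ (t : ℕ)) < q ^ n - 1 := by
    intro s hcard
    have himg : ∑ t ∈ s, q ^ (t : ℕ) = ∑ j ∈ s.image Fin.val, q ^ j :=
      (Finset.sum_image (fun a _ b _ h => Fin.val_injective h)).symm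
    have hsub : s.image Fin.val ⊆ Finset.range n := by
      intro j hj
      rw [Finset.mem_image] at hj
      obtain ⟨t, _, rfl⟩ := hj
      exact Finset.mem_range.mpr t.isLt
    have hcases : 3 ≤ q ∨ s.image Fin.val ≠ Finset.range n := by
      by_cases h3 : 3 ≤ q
      · exact Or.inl h3
      · right
        have hq2' : q = 2 := by omega
        have hwn : w ≠ n := hbad hq2'
        intro heq
        have := Finset.card_image_of_injective s Fin.val_injective
        rw [heq, Finset.card_range, hcard] at this
        exact hwn this.symm
    rw [himg]
    exact sum_pow_lt q n hq hn hsub hcases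
  have hval : ∀ s : Finset (Fin n), s.card = w →
      (((∑ t ∈ s, q ^ (t : ℕ) : ℕ) : ZMod (q ^ n - 1))).val = ∑ t ∈ s, q ^ (t : ℕ) :=
    fun s hs => ZMod.val_cast_of_lt (hsumlt s hs)
  rw [dft]
  have step1 : ∑ k : ZMod (q ^ n - 1), (deltaFun q n w k : K) * b ^ k.val
      = ∑ k ∈ Finset.univ.filter (fun k : ZMod (q ^ n - 1) => inOmega q n w k.val),
          b ^ k.val := by
    rw [Finset.sum_filter]
    apply Finset.sum_congr rfl
    intro k _
    rw [deltaFun]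
    by_cases h : inOmega q n w k.val
    · rw [if_pos h, if_pos h, one_mul]
    · rw [if_neg h, if_neg h, zero_mul]
  rw [step1]
  symm
  apply Finset.sum_bij
    (i := fun (s : Finset (Fin n)) (hs : s ∈ Finset.powersetCard w Finset.univ) =>
      ((∑ t ∈ s, q ^ (t : ℕ) : ℕ) : ZMod (q ^ n - 1)))
  · intro s hs
    have hcard : s.card = w := (Finset.mem_powersetCard.mp hs).2
    rw [Finset.mem_filter]
    refine ⟨Finset.mem_univ _, ?_⟩
    rw [hval s hcard]
    exact ⟨s, hcard, rfl⟩
  · intro s₁ hs₁ s₂ hs₂ heq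
    have hcard₁ : s₁.card = w := (Finset.mem_powersetCard.mp hs₁).2
    have hcard₂ : s₂.card = w := (Finset.mem_powersetCard.mp hs₂).2
    have : (∑ t ∈ s₁, q ^ (t : ℕ)) = ∑ t ∈ s₂, q ^ (t : ℕ) := by
      have := congrArg ZMod.val heq
      rwa [hval s₁ hcard₁, hval s₂ hcard₂] at this
    -- move to images
    have himg : ∀ s : Finset (Fin n), ∑ t ∈ s, q ^ (t : ℕ) = ∑ j ∈ s.image Fin.val, q ^ j :=
      fun s => (Finset.sum_image (fun a _ b _ h => Fin.val_injective h)).symm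
    have hsub : ∀ s : Finset (Fin n), s.image Fin.val ⊆ Finset.range n := by
      intro s j hj
      rw [Finset.mem_image] at hj
      obtain ⟨t, _, rfl⟩ := hj
      exact Finset.mem_range.mpr t.isLt
    have heqimg : s₁.image Fin.val = s₂.image Fin.val := by
      apply sum_pow_injOn q hq n _ _ (hsub s₁) (hsub s₂)
      rw [← himg s₁, ← himg s₂]
      exact this
    exact Finset.image_injective Fin.val_injective heqimg
  · intro k hk
    rw [Finset.mem_filter] at hk
    obtain ⟨-, s, hcard, hsum⟩ := hk
    refine ⟨s, Finset.mem_powersetCard.mpr ⟨Finset.subset_univ _, hcard⟩, ?_⟩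
    rw [← hsum]
    exact ZMod.natCast_rightInverse k
  · intro s hs
    have hcard : s.card = w := (Finset.mem_powersetCard.mp hs).2
    rw [hval s hcard, ← Finset.prod_pow_eq_pow_sum]


theorem coeff_prod_X_sub_C {K : Type*} [CommRing K] {n : ℕ} (v : Fin n → K) {w : ℕ}
    (hw : w ≤ n) :
    (∏ t : Fin n, (X - C (v t))).coeff (n - w)
      = (-1) ^ w * ∑ s ∈ Finset.powersetCard w (Finset.univ : Finset (Fin n)), ∏ t ∈ s, v t := by
  have hcard : Multiset.card (Multiset.map v (Finset.univ : Finset (Fin n)).val) = n := by simp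
  have h := Multiset.prod_X_sub_C_coeff (Multiset.map v (Finset.univ : Finset (Fin n)).val)
      (k := n - w) (by rw [hcard]; omega)
  rw [hcard] at h
  have hnw : n - (n - w) = w := by omega
  rw [hnw] at h
  rw [Finset.prod_eq_multiset_prod]
  have hmm : Multiset.map (fun t => X - C (v t)) (Finset.univ : Finset (Fin n)).val
      = Multiset.map (fun t => X - C t) (Multiset.map v (Finset.univ : Finset (Fin n)).val) := by
    rw [Multiset.map_map]
    rfl
  rw [hmm, h, Finset.esymm_map_val]

theorem val_finRotate {n : ℕ} (hn : 1 ≤ n) (t : Fin n) :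
    ((finRotate n t : Fin n) : ℕ) = if (t : ℕ) + 1 = n then 0 else (t : ℕ) + 1 := by
  rcases n with _ | m
  · omega
  · rw [coe_finRotate]
    by_cases h : t = Fin.last m
    · rw [if_pos h, if_pos (by rw [h]; simp [Fin.last])]
    · rw [if_neg h, if_neg (by
        intro hc
        apply h
        apply Fin.ext
        simp only [Fin.val_last]
        omega)]

end AuxIrr

open AuxIrr Polynomial IntermediateField in
theorem exists_irreducible_sum_eq
    {F : Type*} [Field F] [Fintype F] (c : F) (n : ℕ) (hn : 2 ≤ n)
    (W : Finset ℕ) (hW : W ⊆ Finset.range (n + 1))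
    (hq2 : Fintype.card F = 2 → n ∉ W)
    (hper : ¬ ((leastPeriod (fun k : ZMod (Fintype.card F ^ n - 1) =>
        (if k = 0 then (1 : F) else 0) -
          convPow (Fintype.card F ^ n - 1)
            (fun j : ZMod (Fintype.card F ^ n - 1) =>
              (∑ w ∈ W, (-1 : F) ^ w * deltaFun (Fintype.card F) n w j) -
                c * deltaFun (Fintype.card F) n 0 j)
            (Fintype.card F - 1) k) : ℤ) ∣
        ((Fintype.card F : ℤ) ^ n - 1) / (Polynomial.cyclotomic n ℤ).eval (Fintype.card F : ℤ))) :
    ∃ P : Polynomial F, P.Monic ∧ Irreducible P ∧ P.natDegree = n ∧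
      (∑ w ∈ W.image (fun w => n - w), P.coeff w) = c := by
  classical
  set q : ℕ := Fintype.card F with hq
  have hq2' : 2 ≤ q := Fintype.one_lt_card
  have hn0 : n ≠ 0 := by omega
  have hqn1 : 1 < q ^ n := Nat.one_lt_pow hn0 hq2'
  set N : ℕ := q ^ n - 1 with hNdef
  have hNpos : 0 < N := by omega
  haveI : NeZero N := ⟨hNpos.ne'⟩
  set g : ZMod N → F := fun j : ZMod N =>
    (∑ w ∈ W, (-1 : F) ^ w * deltaFun q n w j) - c * deltaFun q n 0 j with hgdef
  set Δ : ZMod N → F := fun k : ZMod N =>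
    (if k = 0 then (1 : F) else 0) - convPow N g (q - 1) k with hΔdef
  -- the auxiliary field K with q^n elements
  set K := SplittingField (X ^ (q ^ n) - X : F[X]) with hK
  haveI : Finite K := Module.finite_of_finite F
  haveI : Fintype K := Fintype.ofFinite K
  have hinj : Function.Injective (algebraMap F K) := (algebraMap F K).injective
  have hcardK : Fintype.card K = q ^ n := card_splittingField F hn0
  have hfinrank : Module.finrank F K = n := finrank_splittingField F hn0
  have hKunits : Fintype.card Kˣ = N := by rw [Fintype.card_units, hcardK]
  obtain ⟨α, hα⟩ := IsCyclic.exists_generator (α := Kˣ)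
  have hordα : orderOf α = N := by
    rw [orderOf_eq_card_of_forall_mem_zpowers hα, Nat.card_eq_fintype_card, hKunits]
  have hαN : (α : K) ^ N = 1 := by
    rw [← Units.val_pow_eq_pow_val, ← hordα, pow_orderOf_eq_one, Units.val_one]
  have hαinvN : ((α⁻¹ : Kˣ) : K) ^ N = 1 := by
    rw [← Units.val_pow_eq_pow_val, ← hordα, inv_pow, pow_orderOf_eq_one, inv_one, Units.val_one]
  -- (N : K) = -1
  have hqK : ((q : ℕ) : K) = 0 := by
    have h1 : ((q : ℕ) : F) = 0 := by rw [hq]; exact FiniteField.cast_card_eq_zero F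
    calc ((q : ℕ) : K) = algebraMap F K ((q : ℕ) : F) := (map_natCast (algebraMap F K) q).symm
      _ = 0 := by rw [h1, map_zero]
  have hNK : ((N : ℕ) : K) = -1 := by
    rw [hNdef, Nat.cast_sub (by omega : 1 ≤ q ^ n), Nat.cast_pow, hqK,
      zero_pow hn0, zero_sub, Nat.cast_one]
  -- the cyclotomic value Φ and M
  set Φℤ : ℤ := (Polynomial.cyclotomic n ℤ).eval ((q : ℕ) : ℤ) with hΦZdef
  have hΦpos : 0 < Φℤ := Polynomial.cyclotomic_pos' n (by exact_mod_cast hq2')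
  set Φ : ℕ := Φℤ.toNat with hΦdef
  have hΦcast : ((Φ : ℕ) : ℤ) = Φℤ := Int.toNat_of_nonneg hΦpos.le
  have hΦposN : 0 < Φ := by omega
  have hNcast : ((N : ℕ) : ℤ) = ((q : ℕ) : ℤ) ^ n - 1 := by
    rw [hNdef, Nat.cast_sub (by omega : 1 ≤ q ^ n), Nat.cast_pow, Nat.cast_one]
  have hΦdvdZ : Φℤ ∣ ((N : ℕ) : ℤ) := by
    rw [hNcast]
    exact cyclotomic_dvd_int hq2' (by omega)
  have hΦdvd : Φ ∣ N := by
    rw [← Int.natCast_dvd_natCast, hΦcast]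
    exact hΦdvdZ
  set M : ℕ := N / Φ with hMdef
  have hMpos : 0 < M := Nat.div_pos (Nat.le_of_dvd hNpos hΦdvd) hΦposN
  have hΦM : Φ * M = N := Nat.mul_div_cancel' hΦdvd
  -- translate the hypothesis into non-periodicity
  have hper' : ¬ IsPeriodicZMod Δ M := by
    intro hP
    apply hper
    have h1 : leastPeriod Δ ∣ M := leastPeriod_dvd Δ hMpos hP
    rw [← hNcast, ← hΦcast, ← Int.natCast_div]
    exact_mod_cast h1
  -- K-valued versions
  set gK : ZMod N → K := fun j => algebraMap F K (g j) with hgKdef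
  set ΔK : ZMod N → K := fun k => algebraMap F K (Δ k) with hΔKdef
  have hmapconvPow : ∀ m : ℕ, ∀ x : ZMod N,
      algebraMap F K (convPow N g m x) = convPow N gK m x := by
    intro m
    induction m with
    | zero =>
      intro x
      simp only [convPow, apply_ite (algebraMap F K), map_one, map_zero]
    | succ m ih =>
      intro x
      simp only [convPow, conv, map_sum, map_mul]
      apply Finset.sum_congr rfl
      intro j _
      rw [ih]
  have hΔKfun : ΔK = fun k : ZMod N =>
      (fun k : ZMod N => if k = 0 then (1 : K) else 0) k - convPow N gK (q - 1) k := by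
    funext k
    rw [hΔKdef]
    show algebraMap F K (Δ k) = _
    rw [hΔdef]
    show algebraMap F K ((if k = 0 then (1 : F) else 0) - convPow N g (q - 1) k) = _
    rw [map_sub, apply_ite (algebraMap F K), map_one, map_zero, hmapconvPow]
  -- find a good frequency i
  have key : ∃ i : ℕ, i < N ∧ ¬ (Φ ∣ i) ∧ dft ΔK ((α : K) ^ i) ≠ 0 := by
    by_contra hcon
    push_neg at hcon
    apply hper'
    intro k
    have hterm : ∀ i ∈ Finset.range N,
        dft ΔK ((α : K) ^ i) * ((α⁻¹ : Kˣ) : K) ^ (i * (k + (M : ZMod N)).val)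
          = dft ΔK ((α : K) ^ i) * ((α⁻¹ : Kˣ) : K) ^ (i * k.val) := by
      intro i hi
      by_cases hdvd : Φ ∣ i
      · congr 1
        obtain ⟨j, rfl⟩ := hdvd
        apply pow_eq_of_modEq hαinvN
        have h1 : (k + (M : ZMod N)).val ≡ k.val + M [MOD N] := by
          rw [ZMod.val_add]
          calc (k.val + (M : ZMod N).val) % N
              ≡ k.val + (M : ZMod N).val [MOD N] := Nat.mod_modEq _ _
            _ ≡ k.val + M [MOD N] := by
                rw [ZMod.val_natCast]
                exact Nat.ModEq.add_left _ (Nat.mod_modEq _ _)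
        calc Φ * j * (k + (M : ZMod N)).val
            ≡ Φ * j * (k.val + M) [MOD N] := h1.mul_left _
          _ = Φ * j * k.val + j * (Φ * M) := by ring
          _ = Φ * j * k.val + j * N := by rw [hΦM]
          _ ≡ Φ * j * k.val + 0 [MOD N] :=
              Nat.ModEq.add_left _ (Nat.modEq_zero_iff_dvd.mpr ⟨j, Nat.mul_comm j N⟩)
          _ = Φ * j * k.val := by ring
      · rw [hcon i (Finset.mem_range.mp hi) hdvd, zero_mul, zero_mul]
    have hinv1 := dft_inversion α hordα ΔK (k + (M : ZMod N))
    have hinv2 := dft_inversion α hordα ΔK k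
    have hKeq : ((N : ℕ) : K) * ΔK (k + (M : ZMod N)) = ((N : ℕ) : K) * ΔK k := by
      rw [← hinv1, ← hinv2]
      exact Finset.sum_congr rfl hterm
    rw [hNK] at hKeq
    have hΔKeq : ΔK (k + (M : ZMod N)) = ΔK k :=
      mul_left_cancel₀ (neg_ne_zero.mpr one_ne_zero) hKeq
    exact hinj hΔKeq
  obtain ⟨i, hiN, hiΦ, hdft⟩ := key
  set b : K := (α : K) ^ i with hbdef
  have hbu : b = ((α ^ i : Kˣ) : K) := by rw [Units.val_pow_eq_pow_val]
  have hb0 : b ≠ 0 := by rw [hbu]; exact Units.ne_zero _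
  have hbN : b ^ N = 1 := by
    rw [hbdef, ← pow_mul, Nat.mul_comm, pow_mul, hαN, one_pow]
  have hbqn : b ^ (q ^ n) = b := by
    have hqn : q ^ n = N + 1 := by omega
    have h1 : b ^ (q ^ n) = b ^ (N + 1) := congrArg (fun e => b ^ e) hqn
    exact h1.trans (by rw [pow_succ, hbN, one_mul])
  -- dft of ΔK
  have hdftΔ : dft ΔK b = 1 - (dft gK b) ^ (q - 1) := by
    rw [hΔKfun, dft_sub, dft_delta0, dft_convPow gK hbN]
  -- the polynomial P'
  set v : Fin n → K := fun t => b ^ (q ^ (t : ℕ)) with hvdef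
  set P' : K[X] := ∏ t : Fin n, (X - C (v t)) with hP'def
  have hP'monic : P'.Monic := monic_prod_of_monic _ _ (fun t _ => monic_X_sub_C _)
  have hP'deg : P'.natDegree = n := by
    rw [hP'def, natDegree_prod_of_monic _ _ (fun t _ => monic_X_sub_C _)]
    simp
  have hcoeff : ∀ w : ℕ, w ≤ n → P'.coeff (n - w)
      = (-1) ^ w * ∑ s ∈ Finset.powersetCard w (Finset.univ : Finset (Fin n)),
          ∏ t ∈ s, v t := fun w hw => coeff_prod_X_sub_C v hw
  -- dft of gK
  have hgKfun : gK = fun j : ZMod N =>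
      (∑ w ∈ W, (-1 : K) ^ w * (deltaFun q n w j : K))
        - (algebraMap F K c) * (deltaFun q n 0 j : K) := by
    funext j
    rw [hgKdef]
    show algebraMap F K (g j) = _
    rw [hgdef]
    show algebraMap F K ((∑ w ∈ W, (-1 : F) ^ w * deltaFun q n w j)
      - c * deltaFun q n 0 j) = _
    rw [map_sub, map_sum, map_mul]
    congr 1
    · apply Finset.sum_congr rfl
      intro w _
      rw [map_mul, map_pow, map_neg, map_one]
      congr 1
      rw [deltaFun, deltaFun, apply_ite (algebraMap F K), map_one, map_zero]
    · congr 1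
      rw [deltaFun, deltaFun, apply_ite (algebraMap F K), map_one, map_zero]
  have hdftdelta : ∀ w ∈ W, dft (fun k : ZMod N => (deltaFun q n w k : K)) b
      = ∑ s ∈ Finset.powersetCard w (Finset.univ : Finset (Fin n)),
          ∏ t ∈ s, b ^ (q ^ (t : ℕ)) := by
    intro w hw
    have hwn : w ≤ n := by have := hW hw; rw [Finset.mem_range] at this; omega
    exact dft_deltaFun hq2' (by omega) hwn
      (fun h2 => fun hwe => (hq2 h2) (hwe ▸ hw)) b
  have hdftdelta0 : dft (fun k : ZMod N => (deltaFun q n 0 k : K)) b = 1 := by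
    rw [dft_deltaFun hq2' (by omega) (by omega) (fun _ => by omega) b]
    simp
  have hdftg : dft gK b = (∑ w ∈ W, P'.coeff (n - w)) - algebraMap F K c := by
    rw [hgKfun, dft_sub, dft_sum, dft_const_mul, hdftdelta0, mul_one]
    congr 1
    apply Finset.sum_congr rfl
    intro w hw
    have hwn : w ≤ n := by have := hW hw; rw [Finset.mem_range] at this; omega
    rw [dft_const_mul, hdftdelta w hw, hcoeff w hwn]
  -- Frobenius
  obtain ⟨p, hpc⟩ := CharP.exists F
  haveI : CharP F p := hpc
  obtain ⟨v0, hpprime, hcardF⟩ := FiniteField.card F p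
  haveI : Fact p.Prime := ⟨hpprime⟩
  haveI : CharP K p := charP_of_injective_algebraMap hinj p
  set φ : K →+* K := iterateFrobenius K p v0 with hφdef
  have hφ : ∀ x : K, φ x = x ^ q := by
    intro x
    rw [hφdef]
    show iterateFrobenius K p v0 x = x ^ q
    rw [iterateFrobenius_def]
    exact (congrArg (fun e : ℕ => x ^ e) (hq.trans hcardF)).symm
  have hrot : ∀ t : Fin n, (v t) ^ q = v (finRotate n t) := by
    intro t
    have h1 : (v t) ^ q = b ^ (q ^ ((t : ℕ) + 1)) := by
      rw [hvdef]
      show (b ^ q ^ (t : ℕ)) ^ q = b ^ q ^ ((t : ℕ) + 1)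
      rw [← pow_mul, pow_succ]
    have h2 := val_finRotate (by omega : 1 ≤ n) t
    by_cases hc : (t : ℕ) + 1 = n
    · rw [h1, hc, hbqn, hvdef]
      show b = b ^ q ^ ((finRotate n t : Fin n) : ℕ)
      rw [h2, if_pos hc, pow_zero, pow_one]
    · rw [h1, hvdef]
      show b ^ q ^ ((t : ℕ) + 1) = b ^ q ^ ((finRotate n t : Fin n) : ℕ)
      rw [h2, if_neg hc]
  have hmapP' : Polynomial.map φ P' = P' := by
    rw [hP'def, Polynomial.map_prod]
    have hstep : ∀ t : Fin n, Polynomial.map φ (X - C (v t)) = X - C (v (finRotate n t)) := by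
      intro t
      rw [Polynomial.map_sub, Polynomial.map_X, Polynomial.map_C, hφ, hrot]
    rw [Finset.prod_congr rfl (fun t _ => hstep t)]
    exact Equiv.prod_comp (finRotate n) (fun t => X - C (v t))
  have hfix : ∀ j : ℕ, (P'.coeff j) ^ q = P'.coeff j := by
    intro j
    conv_rhs => rw [← hmapP']
    rw [Polynomial.coeff_map, hφ]
  -- x := dft gK b is Frobenius-fixed
  have hxq : (dft gK b) ^ q = dft gK b := by
    calc (dft gK b) ^ q = φ (dft gK b) := (hφ _).symm
      _ = dft gK b := by
          rw [hdftg, map_sub, map_sum]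
          congr 1
          · apply Finset.sum_congr rfl
            intro w _
            rw [hφ, hfix]
          · rw [hφ, ← map_pow]
            congr 1
            rw [hq]
            exact FiniteField.pow_card c
  -- dft gK b = 0
  have hg0 : dft gK b = 0 := by
    by_contra hne
    apply hdft
    show dft ΔK b = 0
    have h1 : dft gK b ^ (q - 1) = 1 := by
      have h2 : dft gK b * dft gK b ^ (q - 1) = dft gK b * 1 := by
        rw [mul_one, ← pow_succ']
        have h3 : q - 1 + 1 = q := by omega
        rw [h3, hxq]
      exact mul_left_cancel₀ hne h2
    rw [hdftΔ, h1, sub_self]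
  have hsum : (∑ w ∈ W, P'.coeff (n - w)) = algebraMap F K c := by
    rw [hdftg] at hg0
    exact sub_eq_zero.mp hg0
  -- lift P' to F
  have hlift : P' ∈ Polynomial.lifts (algebraMap F K) := by
    rw [Polynomial.lifts_iff_coeff_lifts]
    intro j
    obtain ⟨y, hy⟩ := mem_range_algebraMap_of_pow_card (P'.coeff j) (by rw [← hq]; exact hfix j)
    exact ⟨y, hy⟩
  obtain ⟨P, hPmap, hPdeg, hPmonic⟩ :=
    Polynomial.lifts_and_natDegree_eq_and_monic hlift hP'monic
  -- b is a root of P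
  have hrootP' : Polynomial.eval b P' = 0 := by
    rw [hP'def, Polynomial.eval_prod]
    apply Finset.prod_eq_zero (Finset.mem_univ (⟨0, by omega⟩ : Fin n))
    rw [Polynomial.eval_sub, Polynomial.eval_X, Polynomial.eval_C, hvdef]
    show b - b ^ q ^ ((⟨0, by omega⟩ : Fin n) : ℕ) = 0
    rw [pow_zero, pow_one, sub_self]
  have hroot : Polynomial.aeval b P = 0 := by
    rw [Polynomial.aeval_def, ← Polynomial.eval_map, hPmap, hrootP']
  have hint : IsIntegral F b := IsIntegral.of_finite F b
  have hmdvd : minpoly F b ∣ P := minpoly.dvd F b hroot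
  -- minpoly has degree n
  have hmdeg : (minpoly F b).natDegree = n := by
    set m := (minpoly F b).natDegree with hmdef
    have hm1 : 0 < m := minpoly.natDegree_pos hint
    have hLrank : Module.finrank F F⟮b⟯ = m := IntermediateField.adjoin.finrank hint
    have hmul := Module.finrank_mul_finrank F (↥F⟮b⟯) K
    have hmn : m ∣ n := by
      refine ⟨Module.finrank (↥F⟮b⟯) K, ?_⟩
      rw [← hLrank, hmul, hfinrank]
    have hmlen : m ≤ n := Nat.le_of_dvd (by omega) hmn
    by_contra hne
    have hmlt : m < n := by omega
    -- b ^ (q ^ m) = b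
    haveI : Finite (↥F⟮b⟯) := Subtype.finite
    haveI : Fintype (↥F⟮b⟯) := Fintype.ofFinite _
    have hcardL : Fintype.card (↥F⟮b⟯) = q ^ m := by
      rw [Module.card_eq_pow_finrank (K := F) (V := ↥F⟮b⟯), hLrank, hq]
    have hgenpow := FiniteField.pow_card (IntermediateField.AdjoinSimple.gen F b)
    rw [hcardL] at hgenpow
    have hbm : b ^ (q ^ m) = b := by
      have hcast := congrArg (fun z : ↥F⟮b⟯ => (z : K)) hgenpow
      simpa [IntermediateField.AdjoinSimple.coe_gen] using hcast
    have hq1 : 1 ≤ q ^ m := Nat.one_le_pow _ _ (by omega)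
    have hbu1 : b ^ (q ^ m - 1) = 1 := by
      have h5 : b ^ (q ^ m - 1) * b = 1 * b := by
        rw [← pow_succ]
        have h6 : q ^ m - 1 + 1 = q ^ m := by omega
        rw [h6, hbm, one_mul]
      exact mul_right_cancel₀ hb0 h5
    have hα1 : α ^ (i * (q ^ m - 1)) = 1 := by
      apply Units.ext
      rw [Units.val_pow_eq_pow_val, Units.val_one, pow_mul]
      rw [← hbdef]
      exact hbu1
    have hdvdN : N ∣ i * (q ^ m - 1) := by
      rw [← hordα]
      exact orderOf_dvd_of_pow_eq_one hα1
    set t : ℕ := q ^ m - 1 with htdef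
    have htpos : 0 < t := by
      have : 2 ≤ q ^ m := by
        calc 2 ≤ q := hq2'
          _ = q ^ 1 := (pow_one q).symm
          _ ≤ q ^ m := Nat.pow_le_pow_right (by omega) (by omega)
      omega
    have htdvdN : t ∣ N := by
      obtain ⟨s, hs⟩ := hmn
      have h7 := Nat.sub_dvd_pow_sub_pow (q ^ m) 1 s
      rw [one_pow, ← pow_mul, ← hs] at h7
      rw [htdef, hNdef]
      exact h7
    have hNt : (N / t) * t = N := Nat.div_mul_cancel htdvdN
    have h8 : N / t ∣ i := by
      have h9 : (N / t) * t ∣ i * t := by rw [hNt]; exact hdvdN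
      exact (Nat.mul_dvd_mul_iff_right htpos).mp h9
    have h10 : Φ ∣ N / t := by
      have hZ := cyclotomic_mul_pow_dvd_int (q := q) hq2' hmn hm1 hmlt
      have hcast1 : ((t : ℕ) : ℤ) = ((q : ℕ) : ℤ) ^ m - 1 := by
        rw [htdef, Nat.cast_sub hq1, Nat.cast_pow, Nat.cast_one]
      have hZ' : ((Φ * t : ℕ) : ℤ) ∣ ((N : ℕ) : ℤ) := by
        rw [Nat.cast_mul, hΦcast, hcast1, hNcast]
        exact hZ
      have hZnat : Φ * t ∣ N := Int.natCast_dvd_natCast.mp hZ'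
      have h11 : Φ * t ∣ (N / t) * t := by rw [hNt]; exact hZnat
      exact (Nat.mul_dvd_mul_iff_right htpos).mp h11
    exact hiΦ (h10.trans h8)
  -- P is the minimal polynomial
  have hPdegn : P.natDegree = n := by rw [hPdeg, hP'deg]
  have hPeq : P = minpoly F b := by
    obtain ⟨u, hu⟩ := hmdvd
    have humonic : u.Monic := (minpoly.monic hint).of_mul_monic_left (hu ▸ hPmonic)
    have hdegmul : P.natDegree = n + u.natDegree := by
      rw [hu, Polynomial.Monic.natDegree_mul (minpoly.monic hint) humonic, hmdeg]
    have hu1 : u = 1 := humonic.natDegree_eq_zero.mp (by omega)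
    rw [hu, hu1, mul_one]
  have hPirr : Irreducible P := hPeq ▸ minpoly.irreducible hint
  -- conclude
  refine ⟨P, hPmonic, hPirr, hPdegn, ?_⟩
  have hinjW : ∀ x ∈ W, ∀ y ∈ W, n - x = n - y → x = y := by
    intro x hx y hy hxy
    have hx' := hW hx
    have hy' := hW hy
    rw [Finset.mem_range] at hx' hy'
    omega
  rw [Finset.sum_image hinjW]
  apply hinj
  rw [map_sum]
  have hco : ∀ w ∈ W, algebraMap F K (P.coeff (n - w)) = P'.coeff (n - w) := by
    intro w _
    rw [← hPmap, Polynomial.coeff_map]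
  rw [Finset.sum_congr rfl hco, hsum]
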